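/- Let K = ℚ(α,β,γ) and set û = ¼(α+β+γ)(2−α−β−γ) and v̂ = ¼(α−β−γ)(α−β+γ) in K. Let s = (α+β+γ)/2, let B ∈ K[[z]] be the binomial series for (1−z)^s, i.e. B = Σ_{n≥0} (−1)^n (s(s−1)⋯(s−n+1)/n!) z^n, and let F ∈ K[[z]] be the hypergeometric series F = Σ_{n≥0} ((α)_n (β)_n)/(n! (1−γ)_n) z^n, where (x)_n = x(x+1)⋯(x+n−1) is the rising factorial (with (x)_0 = 1). Then the product g = B·F has constant term 1 and satisfies the formal differential equation (1−z)² z² g'' + (1−γ) z (1−z)² g' + ( v̂ z(1−z) + û z ) g = 0; equivalently, the coefficients g_n of g satisfy g_0 = 1 and n(γ−n) g_n = Σ_{i=0}^{n−1} ((n−i)û + v̂) g_i for all n ≥ 1. -/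

import Mathlib

set_option maxHeartbeats 1000000


open Finset PowerSeries

/-- The field `K = ℚ(α,β,γ)`, realized as the fraction field of `ℚ[α,β,γ]`. -/
noncomputable abbrev Kabc : Type := FractionRing (MvPolynomial (Fin 3) ℚ)

private lemma coeff_X_mul_d (f : PowerSeries Kabc) (n : ℕ) :
    PowerSeries.coeff n (PowerSeries.X * d⁄dX Kabc f) = n * PowerSeries.coeff n f := by
  cases n with
  | zero => simp [PowerSeries.coeff_zero_eq_constantCoeff, map_mul]
  | succ m => rw [PowerSeries.coeff_succ_X_mul, PowerSeries.coeff_derivative]; push_cast; ring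

private lemma gamma_prod_ne (γ : Kabc)
    (hγ : γ = algebraMap (MvPolynomial (Fin 3) ℚ) Kabc (MvPolynomial.X 2)) (n : ℕ) :
    (∏ j ∈ Finset.range n, (1 - γ + (j : Kabc))) ≠ 0 := by
  apply Finset.prod_ne_zero_iff.mpr
  intro j _ hzero
  have hγval : γ = ((1 + j : ℕ) : Kabc) := by push_cast; linear_combination -hzero
  rw [hγ] at hγval
  have hinj := IsFractionRing.injective (MvPolynomial (Fin 3) ℚ) Kabc
  have hX : MvPolynomial.X (R := ℚ) (2 : Fin 3) = MvPolynomial.C ((1 + j : ℕ) : ℚ) :=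
    hinj (show algebraMap (MvPolynomial (Fin 3) ℚ) Kabc (MvPolynomial.X 2)
        = algebraMap (MvPolynomial (Fin 3) ℚ) Kabc (MvPolynomial.C ((1 + j : ℕ) : ℚ)) from by
      rw [MvPolynomial.C_eq_coe_nat, map_natCast]; exact hγval)
  have h2 := congrArg (MvPolynomial.coeff (Finsupp.single 2 1)) hX
  rw [MvPolynomial.coeff_X, MvPolynomial.coeff_C] at h2
  simp [Finsupp.single_eq_zero, eq_comm] at h2

private lemma brec (s : Kabc) (n : ℕ) :
    (PowerSeries.coeff (n+1) (PowerSeries.mk fun n =>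
        (-1) ^ n * (∏ j ∈ Finset.range n, (s - (j : Kabc))) / (n.factorial : Kabc))) * ((n : Kabc)+1)
      = ((n : Kabc) - s) * PowerSeries.coeff n (PowerSeries.mk fun n =>
        (-1) ^ n * (∏ j ∈ Finset.range n, (s - (j : Kabc))) / (n.factorial : Kabc)) := by
  simp only [PowerSeries.coeff_mk]
  rw [Finset.prod_range_succ, Nat.factorial_succ]
  have h1 : ((n.factorial : Kabc)) ≠ 0 := Nat.cast_ne_zero.mpr (Nat.factorial_ne_zero _)
  have h2 : ((n : Kabc) + 1) ≠ 0 := by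
    have := Nat.cast_ne_zero (R := Kabc) (n := n + 1) |>.mpr n.succ_ne_zero
    push_cast at this; exact this
  push_cast
  field_simp
  ring

private lemma frec (α β γ : Kabc)
    (hne : ∀ m : ℕ, (∏ j ∈ Finset.range m, (1 - γ + (j : Kabc))) ≠ 0) (n : ℕ) :
    (PowerSeries.coeff (n+1) (PowerSeries.mk fun n =>
      ((∏ j ∈ Finset.range n, (α + (j : Kabc))) * ∏ j ∈ Finset.range n, (β + (j : Kabc))) /
        ((n.factorial : Kabc) * ∏ j ∈ Finset.range n, (1 - γ + (j : Kabc)))))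
      * (((n : Kabc)+1) * (1 - γ + (n : Kabc)))
    = ((α + (n : Kabc)) * (β + (n : Kabc))) * PowerSeries.coeff n (PowerSeries.mk fun n =>
      ((∏ j ∈ Finset.range n, (α + (j : Kabc))) * ∏ j ∈ Finset.range n, (β + (j : Kabc))) /
        ((n.factorial : Kabc) * ∏ j ∈ Finset.range n, (1 - γ + (j : Kabc)))) := by
  simp only [PowerSeries.coeff_mk]
  rw [Finset.prod_range_succ, Finset.prod_range_succ, Finset.prod_range_succ, Nat.factorial_succ]
  have h1 : ((n.factorial : Kabc)) ≠ 0 := Nat.cast_ne_zero.mpr (Nat.factorial_ne_zero _)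
  have h2 : ((n : Kabc) + 1) ≠ 0 := by
    have := Nat.cast_ne_zero (R := Kabc) (n := n + 1) |>.mpr n.succ_ne_zero
    push_cast at this; exact this
  have h3 : (∏ j ∈ Finset.range n, (1 - γ + (j : Kabc))) ≠ 0 := hne n
  have h4 : (1 - γ + (n : Kabc)) ≠ 0 := by
    have := hne (n+1)
    rw [Finset.prod_range_succ] at this
    exact (mul_ne_zero_iff.mp this).2
  push_cast
  field_simp

/-- Proposition 3: with `û = ¼(α+β+γ)(2-α-β-γ)`, `v̂ = ¼(α-β-γ)(α-β+γ)` and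
`s = (α+β+γ)/2`, the product `g = B·F` of the binomial series
`B = (1-z)^s = ∑ (-1)ⁿ (s(s-1)⋯(s-n+1)/n!) zⁿ` with the hypergeometric series
`F = F(α,β,1-γ;z) = ∑ ((α)_n (β)_n)/(n! (1-γ)_n) zⁿ` has constant term `1`, satisfies
`(1-z)² z² g'' + (1-γ) z (1-z)² g' + (v̂ z(1-z) + û z) g = 0`, and equivalently its
coefficients satisfy `n(γ-n) g_n = ∑_{i=0}^{n-1} ((n-i)û + v̂) g_i` for all `n ≥ 1`. -/
theorem binomial_mul_hypergeometric_solves_ode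
    (α β γ : Kabc)
    (hα : α = algebraMap (MvPolynomial (Fin 3) ℚ) Kabc (MvPolynomial.X 0))
    (hβ : β = algebraMap (MvPolynomial (Fin 3) ℚ) Kabc (MvPolynomial.X 1))
    (hγ : γ = algebraMap (MvPolynomial (Fin 3) ℚ) Kabc (MvPolynomial.X 2))
    (uh vh s : Kabc)
    (huh : uh = (1 / 4 : Kabc) * (α + β + γ) * (2 - α - β - γ))
    (hvh : vh = (1 / 4 : Kabc) * (α - β - γ) * (α - β + γ))
    (hs : s = (α + β + γ) / 2)
    (B F g : PowerSeries Kabc)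
    (hB : B = PowerSeries.mk fun n =>
      (-1) ^ n * (∏ j ∈ Finset.range n, (s - (j : Kabc))) / (n.factorial : Kabc))
    (hF : F = PowerSeries.mk fun n =>
      ((∏ j ∈ Finset.range n, (α + (j : Kabc))) * ∏ j ∈ Finset.range n, (β + (j : Kabc))) /
        ((n.factorial : Kabc) * ∏ j ∈ Finset.range n, (1 - γ + (j : Kabc))))
    (hg : g = B * F) :
    PowerSeries.constantCoeff g = 1 ∧
    ((1 - PowerSeries.X) ^ 2 * PowerSeries.X ^ 2 * (d⁄dX Kabc (d⁄dX Kabc g))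
        + PowerSeries.C (1 - γ) * PowerSeries.X * (1 - PowerSeries.X) ^ 2 * (d⁄dX Kabc g)
        + (PowerSeries.C vh * PowerSeries.X * (1 - PowerSeries.X)
            + PowerSeries.C uh * PowerSeries.X) * g = 0) ∧
    (∀ n : ℕ, 1 ≤ n →
      (n : Kabc) * (γ - n) * PowerSeries.coeff n g =
        ∑ i ∈ Finset.range n, (((n : Kabc) - (i : Kabc)) * uh + vh) * PowerSeries.coeff i g) := by
  subst hg
  have hPC := gamma_prod_ne γ hγ
  -- Part 1 : constant coefficient
  have part1 : PowerSeries.constantCoeff (B * F) = 1 := by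
    rw [map_mul, hB, hF]
    rw [← PowerSeries.coeff_zero_eq_constantCoeff]
    simp [PowerSeries.coeff_mk]
  -- scalar identities
  have key1 : vh + α * β = s * s - s * γ := by rw [hvh, hs]; ring
  have key2 : uh = s - s * s := by rw [huh, hs]; ring
  have key3 : α + β + γ = 2 * s := by rw [hs]; ring
  have c1 : PowerSeries.C vh + PowerSeries.C α * PowerSeries.C β
      = PowerSeries.C s * PowerSeries.C s
        - PowerSeries.C s * PowerSeries.C γ := by
    have := congrArg (PowerSeries.C) key1
    simpa [map_add, map_mul, map_sub] using this
  have c2 : PowerSeries.C uh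
      = PowerSeries.C s - PowerSeries.C s * PowerSeries.C s := by
    have := congrArg (PowerSeries.C) key2
    simpa [map_sub, map_mul] using this
  have c3 : PowerSeries.C α + PowerSeries.C β + PowerSeries.C γ
      = 2 * PowerSeries.C s := by
    have := congrArg (PowerSeries.C) key3
    simpa [map_add, map_mul, map_ofNat] using this
  -- the binomial series ODE
  have HB : (1 - PowerSeries.X) * d⁄dX Kabc B + PowerSeries.C s * B = 0 := by
    ext n
    rw [sub_mul, one_mul]
    simp only [map_add, map_sub, PowerSeries.coeff_C_mul, map_zero]
    cases n with
    | zero =>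
      have hx : PowerSeries.coeff 0 (PowerSeries.X * d⁄dX Kabc B) = 0 := by
        simp [PowerSeries.coeff_zero_eq_constantCoeff, map_mul]
      rw [hx, PowerSeries.coeff_derivative, hB]
      simp only [PowerSeries.coeff_mk]
      norm_num [Finset.prod_range_one]
    | succ m =>
      rw [PowerSeries.coeff_succ_X_mul, PowerSeries.coeff_derivative,
        PowerSeries.coeff_derivative, hB]
      have h := brec s (m+1)
      push_cast at h ⊢
      linear_combination h
  -- derived second-order relation for B
  have HB' : (1 - PowerSeries.X) * d⁄dX Kabc (d⁄dX Kabc B)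
      + (PowerSeries.C s - 1) * d⁄dX Kabc B = 0 := by
    have hd := congrArg (d⁄dX Kabc) HB
    simp only [map_add, map_zero, Derivation.leibniz, smul_eq_mul, map_sub, map_one,
      Derivation.map_one_eq_zero, PowerSeries.derivative_X, PowerSeries.derivative_C] at hd
    linear_combination hd
  -- the hypergeometric ODE (theta form)
  have HFθ : PowerSeries.X * d⁄dX Kabc (PowerSeries.X * d⁄dX Kabc F)
      - PowerSeries.C γ * (PowerSeries.X * d⁄dX Kabc F)
      - PowerSeries.X * (PowerSeries.X * d⁄dX Kabc (PowerSeries.X * d⁄dX Kabc F)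
          + (PowerSeries.C α * (PowerSeries.X * d⁄dX Kabc F)
            + PowerSeries.C β * (PowerSeries.X * d⁄dX Kabc F))
          + PowerSeries.C α * (PowerSeries.C β * F)) = 0 := by
    ext n
    cases n with
    | zero =>
      simp [PowerSeries.coeff_zero_eq_constantCoeff, map_mul, map_sub]
    | succ m =>
      simp only [map_sub, PowerSeries.coeff_C_mul, coeff_X_mul_d, map_zero]
      rw [PowerSeries.coeff_succ_X_mul]
      simp only [map_add, PowerSeries.coeff_C_mul, coeff_X_mul_d]
      rw [hF]
      have h := frec α β γ hPC m
      push_cast at h ⊢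
      linear_combination h
  -- convert to the standard-form hypergeometric ODE
  have hθ2 : d⁄dX Kabc (PowerSeries.X * d⁄dX Kabc F)
      = d⁄dX Kabc F + PowerSeries.X * d⁄dX Kabc (d⁄dX Kabc F) := by
    rw [Derivation.leibniz, smul_eq_mul, smul_eq_mul, PowerSeries.derivative_X]
    ring
  have hXE : PowerSeries.X * (PowerSeries.X * (1 - PowerSeries.X) * d⁄dX Kabc (d⁄dX Kabc F)
      + ((1 - PowerSeries.C γ)
          - (PowerSeries.C α + PowerSeries.C β + 1) * PowerSeries.X) * d⁄dX Kabc F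
      - PowerSeries.C α * PowerSeries.C β * F) = 0 := by
    linear_combination HFθ - ((1 - PowerSeries.X) * PowerSeries.X) * hθ2
  have HF : PowerSeries.X * (1 - PowerSeries.X) * d⁄dX Kabc (d⁄dX Kabc F)
      + ((1 - PowerSeries.C γ)
          - (PowerSeries.C α + PowerSeries.C β + 1) * PowerSeries.X) * d⁄dX Kabc F
      - PowerSeries.C α * PowerSeries.C β * F = 0 := by
    rcases mul_eq_zero.mp hXE with h | h
    · exact absurd h PowerSeries.X_ne_zero
    · exact h
  -- derivatives of the product
  have hdg : d⁄dX Kabc (B * F) = d⁄dX Kabc B * F + B * d⁄dX Kabc F := by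
    rw [Derivation.leibniz, smul_eq_mul, smul_eq_mul]; ring
  have hddg : d⁄dX Kabc (d⁄dX Kabc (B * F))
      = d⁄dX Kabc (d⁄dX Kabc B) * F + 2 * (d⁄dX Kabc B * d⁄dX Kabc F)
        + B * d⁄dX Kabc (d⁄dX Kabc F) := by
    rw [hdg, map_add, Derivation.leibniz, Derivation.leibniz, smul_eq_mul, smul_eq_mul,
      smul_eq_mul, smul_eq_mul]
    ring
  -- Part 2 : the ODE
  have hODE2 : (1 - PowerSeries.X) ^ 2 * PowerSeries.X ^ 2 * (d⁄dX Kabc (d⁄dX Kabc (B * F)))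
      + (1 - PowerSeries.C γ) * PowerSeries.X * (1 - PowerSeries.X) ^ 2
          * (d⁄dX Kabc (B * F))
      + (PowerSeries.C vh * PowerSeries.X * (1 - PowerSeries.X)
          + PowerSeries.C uh * PowerSeries.X) * (B * F) = 0 := by
    linear_combination (PowerSeries.X ^ 2 * (1 - PowerSeries.X) ^ 2) * hddg
      + ((1 - PowerSeries.C γ) * PowerSeries.X * (1 - PowerSeries.X) ^ 2) * hdg
      + (PowerSeries.X ^ 2 * (1 - PowerSeries.C s) * F
          + 2 * PowerSeries.X ^ 2 * (1 - PowerSeries.X) * d⁄dX Kabc F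
          + (1 - PowerSeries.C γ) * PowerSeries.X * (1 - PowerSeries.X) * F) * HB
      + (PowerSeries.X ^ 2 * (1 - PowerSeries.X) * F) * HB'
      + (PowerSeries.X * (1 - PowerSeries.X) * B) * HF
      + (PowerSeries.X * (1 - PowerSeries.X) * (B * F)) * c1
      + (PowerSeries.X * (B * F)) * c2
      + (PowerSeries.X ^ 2 * (1 - PowerSeries.X) * (B * d⁄dX Kabc F)) * c3
  have part2 : (1 - PowerSeries.X) ^ 2 * PowerSeries.X ^ 2 * (d⁄dX Kabc (d⁄dX Kabc (B * F)))
      + PowerSeries.C (1 - γ) * PowerSeries.X * (1 - PowerSeries.X) ^ 2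
          * (d⁄dX Kabc (B * F))
      + (PowerSeries.C vh * PowerSeries.X * (1 - PowerSeries.X)
          + PowerSeries.C uh * PowerSeries.X) * (B * F) = 0 := by
    rw [map_sub, map_one]; exact hODE2
  refine ⟨part1, part2, ?_⟩
  -- Part 3 : the coefficient recurrence
  have hMexp : PowerSeries.X * d⁄dX Kabc (PowerSeries.X * d⁄dX Kabc (B * F))
      = PowerSeries.X * d⁄dX Kabc (B * F)
        + PowerSeries.X * PowerSeries.X * d⁄dX Kabc (d⁄dX Kabc (B * F)) := by
    rw [Derivation.leibniz, smul_eq_mul, smul_eq_mul, PowerSeries.derivative_X]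
    ring
  obtain ⟨Dser, hDser⟩ : ∃ D : PowerSeries Kabc, D = PowerSeries.mk fun k => ((k : Kabc) + 1) :=
    ⟨_, rfl⟩
  have hD : (1 - PowerSeries.X) ^ 2 * Dser = 1 := by
    have hexp : (1 - PowerSeries.X) ^ 2 * Dser
        = Dser - (PowerSeries.X * Dser) - (PowerSeries.X * Dser)
          + PowerSeries.X * (PowerSeries.X * Dser) := by ring
    rw [hexp]
    ext n
    rw [map_add, map_sub, map_sub]
    match n with
    | 0 =>
      simp [hDser, PowerSeries.coeff_zero_eq_constantCoeff, map_mul]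
    | 1 =>
      simp only [PowerSeries.coeff_succ_X_mul]
      have hx : PowerSeries.coeff 0 (PowerSeries.X * Dser) = 0 := by
        simp [PowerSeries.coeff_zero_eq_constantCoeff, map_mul]
      rw [hx, hDser]
      simp [PowerSeries.coeff_one]
    | (m+2) =>
      simp only [PowerSeries.coeff_succ_X_mul]
      rw [hDser]
      simp only [PowerSeries.coeff_mk, PowerSeries.coeff_one, Nat.succ_ne_zero, if_false]
      push_cast
      ring
  have hM0 : (1 - PowerSeries.X) ^ 2
        * (PowerSeries.X * d⁄dX Kabc (PowerSeries.X * d⁄dX Kabc (B * F))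
            - PowerSeries.C γ * (PowerSeries.X * d⁄dX Kabc (B * F)))
      + (PowerSeries.C vh * PowerSeries.X * (1 - PowerSeries.X)
          + PowerSeries.C uh * PowerSeries.X) * (B * F) = 0 := by
    linear_combination hODE2 + (1 - PowerSeries.X) ^ 2 * hMexp
  have hM1 : (PowerSeries.X * d⁄dX Kabc (PowerSeries.X * d⁄dX Kabc (B * F))
        - PowerSeries.C γ * (PowerSeries.X * d⁄dX Kabc (B * F)))
      + ((PowerSeries.C vh * PowerSeries.X * (1 - PowerSeries.X)
          + PowerSeries.C uh * PowerSeries.X) * Dser) * (B * F) = 0 := by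
    linear_combination Dser * hM0
      - (PowerSeries.X * d⁄dX Kabc (PowerSeries.X * d⁄dX Kabc (B * F))
          - PowerSeries.C γ * (PowerSeries.X * d⁄dX Kabc (B * F))) * hD
  have hXD : ∀ m : ℕ, PowerSeries.coeff m (PowerSeries.X * Dser) = (m : Kabc) := by
    intro m
    cases m with
    | zero => simp [PowerSeries.coeff_zero_eq_constantCoeff, map_mul]
    | succ l =>
      rw [PowerSeries.coeff_succ_X_mul, hDser]
      simp only [PowerSeries.coeff_mk]
      push_cast; ring
  have hWc : ∀ k : ℕ, PowerSeries.coeff k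
      ((PowerSeries.C vh * PowerSeries.X * (1 - PowerSeries.X)
        + PowerSeries.C uh * PowerSeries.X) * Dser)
      = if k = 0 then 0 else vh + (k : Kabc) * uh := by
    intro k
    have hring : (PowerSeries.C vh * PowerSeries.X * (1 - PowerSeries.X)
          + PowerSeries.C uh * PowerSeries.X) * Dser
        = PowerSeries.C vh * (PowerSeries.X * Dser)
          - PowerSeries.C vh * (PowerSeries.X * (PowerSeries.X * Dser))
          + PowerSeries.C uh * (PowerSeries.X * Dser) := by ring
    rw [hring, map_add, map_sub, PowerSeries.coeff_C_mul, PowerSeries.coeff_C_mul,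
      PowerSeries.coeff_C_mul]
    cases k with
    | zero =>
      rw [hXD]
      have hx : PowerSeries.coeff 0 (PowerSeries.X * (PowerSeries.X * Dser)) = 0 := by
        simp [PowerSeries.coeff_zero_eq_constantCoeff, map_mul]
      rw [hx]
      simp
    | succ l =>
      rw [hXD, PowerSeries.coeff_succ_X_mul, hXD]
      simp only [Nat.succ_ne_zero, if_false]
      push_cast; ring
  intro n hn
  have hc := congrArg (PowerSeries.coeff n) hM1
  rw [map_add, map_sub, coeff_X_mul_d, coeff_X_mul_d, PowerSeries.coeff_C_mul,
    coeff_X_mul_d, map_zero,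
    PowerSeries.coeff_mul n ((PowerSeries.C vh * PowerSeries.X * (1 - PowerSeries.X)
      + PowerSeries.C uh * PowerSeries.X) * Dser) (B * F),
    Finset.Nat.sum_antidiagonal_eq_sum_range_succ_mk, Finset.sum_range_succ'] at hc
  simp only [hWc, Nat.succ_ne_zero, if_false, if_true, zero_mul, add_zero,
    Nat.cast_add, Nat.cast_one] at hc
  have hsum : (∑ k ∈ Finset.range n, (vh + ((k : Kabc) + 1) * uh)
        * PowerSeries.coeff (n - (k + 1)) (B * F))
      = ∑ i ∈ Finset.range n, (((n : Kabc) - (i : Kabc)) * uh + vh)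
        * PowerSeries.coeff i (B * F) := by
    conv_rhs => rw [← Finset.sum_range_reflect]
    apply Finset.sum_congr rfl
    intro k hk
    have hklt : k < n := Finset.mem_range.mp hk
    have hidx : n - 1 - k = n - (k + 1) := by omega
    rw [hidx]
    have hcast : ((n - (k + 1) : ℕ) : Kabc) = (n : Kabc) - ((k : Kabc) + 1) := by
      rw [Nat.cast_sub (by omega)]
      push_cast; ring
    rw [hcast]
    ring
  rw [hsum] at hc
  push_cast at hc ⊢
  linear_combination -hc
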